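/- For w ∈ [4, 6.71], the quadratic in t given by H*(t,w) = (8w-2)t² + (4w² - 5w + 4)t + (-2w² + 8w) has exactly one root τ(w) in [0, 1/2], given by τ(w) = (-4w² + 5w - 4 + √((4w² + 19w + 4)(4w² - 13w + 4)))/(4(4w - 1)). Moreover H*(t,w) < 0 for 0 ≤ t < τ(w) and H*(t,w) > 0 for t > τ(w), and τ(w) = 0 if and only if w = 4. -/

import Mathlib

theorem stmt_16 (w : ℝ) (hw1 : 4 ≤ w) (hw2 : w ≤ 6.71)
    (H : ℝ → ℝ → ℝ)
    (hH : ∀ t w, H t w = 8*w*t^2 - 2*t^2 + 4*w^2*t - 5*w*t + 4*t + 8*w - 2*w^2)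
    (τ : ℝ)
    (hτ : τ = (-4*w^2 + 5*w - 4 +
        Real.sqrt ((4*w^2 + 19*w + 4)*(4*w^2 - 13*w + 4))) / (4*(4*w - 1))) :
    τ ∈ Set.Icc (0:ℝ) (1/2) ∧ H τ w = 0 ∧
    (∀ t ∈ Set.Icc (0:ℝ) (1/2), H t w = 0 → t = τ) ∧
    (∀ t, 0 ≤ t → t < τ → H t w < 0) ∧
    (∀ t, τ < t → 0 < H t w) ∧
    (τ = 0 ↔ w = 4) := by
  set D : ℝ := (4*w^2 + 19*w + 4)*(4*w^2 - 13*w + 4) with hDdef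
  set s : ℝ := Real.sqrt D with hsdef
  have hD0 : 0 < D := by
    have h1 : 0 < 4*w^2 + 19*w + 4 := by nlinarith
    have h2 : 0 < 4*w^2 - 13*w + 4 := by nlinarith
    exact mul_pos h1 h2
  have hs0 : 0 ≤ s := Real.sqrt_nonneg _
  have hs2 : s^2 = D := Real.sq_sqrt hD0.le
  have hden : 0 < 4*(4*w - 1) := by linarith
  have hb : 0 < 4*w^2 - 5*w + 4 := by nlinarith
  -- s ≥ b
  have hsb : 4*w^2 - 5*w + 4 ≤ s := by
    nlinarith [hs2, hs0, hb, sq_nonneg (s - (4*w^2 - 5*w + 4))]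
  -- s ≤ a + b
  have hsab : s ≤ (8*w - 2) + (4*w^2 - 5*w + 4) := by
    nlinarith [hs2, hs0, sq_nonneg (s + (8*w - 2) + (4*w^2 - 5*w + 4))]
  have hτ0 : 0 ≤ τ := by
    rw [hτ]
    apply div_nonneg _ hden.le
    linarith
  have hτhalf : τ ≤ 1/2 := by
    rw [hτ, div_le_iff₀ hden]
    linarith
  -- key quadratic equation
  have key : (8*w - 2)*τ^2 + (4*w^2 - 5*w + 4)*τ + (8*w - 2*w^2) = 0 := by
    rw [hτ]
    have hne : w*4 - 1 ≠ 0 := by linarith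
    field_simp
    nlinarith [hs2]
  have hfac : ∀ t : ℝ, H t w = (t - τ) * ((8*w - 2)*(t + τ) + (4*w^2 - 5*w + 4)) := by
    intro t
    rw [hH]
    linear_combination key
  have hQ : ∀ t : ℝ, 0 ≤ t → 0 < (8*w - 2)*(t + τ) + (4*w^2 - 5*w + 4) := by
    intro t ht
    nlinarith [hτ0]
  refine ⟨⟨hτ0, hτhalf⟩, ?_, ?_, ?_, ?_, ?_⟩
  · rw [hfac τ]; ring
  · intro t ⟨ht0, _⟩ hzero
    rw [hfac t] at hzero
    rcases mul_eq_zero.1 hzero with h | h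
    · linarith
    · exact absurd h (hQ t ht0).ne'
  · intro t ht0 htτ
    rw [hfac t]
    exact mul_neg_of_neg_of_pos (by linarith) (hQ t ht0)
  · intro t htτ
    rw [hfac t]
    exact mul_pos (by linarith) (hQ t (le_trans hτ0 htτ.le))
  · constructor
    · intro h
      rw [h] at key
      have hc : 8*w - 2*w^2 = 0 := by linarith [key]
      nlinarith [hc]
    · intro h
      subst h
      have hs48 : s = 48 := by
        rw [hsdef, hDdef, show (4*(4:ℝ)^2 + 19*4 + 4)*(4*(4:ℝ)^2 - 13*4 + 4) = 48^2 by norm_num]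
        exact Real.sqrt_sq (by norm_num)
      rw [hτ, hs48]
      norm_num
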